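/- Let A be a Noetherian ring, m ⊂ A an ideal, and (M_i) an inverse system of modules with M_i a module over A_i = A/m^{i+1}, equipped with isomorphisms M_i ⊗_{A_i} A_j ≅ M_j for all j ≤ i (compatible with the transition maps). Let M = lim← M_i. Then for each i, the natural map M ⊗_A A_i → M_i is an isomorphism. -/

import Mathlib

/-- The inverse limit of an `ℕ`-indexed system of modules with transition maps
`f i : M (i+1) → M i`, realized as the submodule of compatible sequences in the
product. -/
def invLimit {R : Type*} [CommRing R] {M : ℕ → Type*}
    [∀ i, AddCommGroup (M i)] [∀ i, Module R (M i)]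
    (f : ∀ i, M (i + 1) →ₗ[R] M i) : Submodule R (∀ i, M i) where
  carrier := {x | ∀ i, f i (x (i + 1)) = x i}
  add_mem' := by intro a b ha hb i; simp [ha i, hb i]
  zero_mem' := by intro i; simp
  smul_mem' := by intro c a ha i; simp [ha i]

section Aux

variable {A : Type*} [CommRing A] {M : ℕ → Type*}
    [∀ i, AddCommGroup (M i)] [∀ i, Module A (M i)]
    (f : ∀ i, M (i + 1) →ₗ[A] M i)

/-- Composite transition maps. -/
def toLe : ∀ {j k : ℕ}, j ≤ k → (M k →ₗ[A] M j) :=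
  fun {j k} h => Nat.leRecOn h (fun {n} g => g ∘ₗ f n) LinearMap.id

lemma toLe_refl {j : ℕ} (h : j ≤ j) : toLe f h = LinearMap.id :=
  Nat.leRecOn_self _

lemma toLe_succ {j k : ℕ} (h : j ≤ k) (h2 : j ≤ k + 1) :
    toLe f h2 = (toLe f h) ∘ₗ f k :=
  Nat.leRecOn_succ h _

lemma f_toLe {j : ℕ} : ∀ {k : ℕ} (h : j + 1 ≤ k),
    (f j) ∘ₗ toLe f h = toLe f ((Nat.le_succ j).trans h) := by
  intro k
  induction k with
  | zero => omega
  | succ k ih =>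
    intro h
    rcases Nat.lt_or_ge k (j + 1) with hge | hlt
    · have hk : k = j := by omega
      subst hk
      rw [toLe_refl f h, toLe_succ f (le_refl _) ((Nat.le_succ _).trans h),
        toLe_refl f (le_refl _)]
      simp
    · rw [toLe_succ f hlt h, toLe_succ f ((Nat.le_succ j).trans hlt),
        ← LinearMap.comp_assoc, ih hlt]

lemma toLe_compat {y : ∀ j, M j} (hy : ∀ i, f i (y (i + 1)) = y i) :
    ∀ {j k : ℕ} (h : j ≤ k), toLe f h (y k) = y j := by
  intro j k
  induction k with
  | zero =>
    intro h
    have : j = 0 := Nat.le_zero.mp h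
    subst this
    rw [toLe_refl f h]; rfl
  | succ k ih =>
    intro h
    by_cases hj : j ≤ k
    · rw [toLe_succ f hj h, LinearMap.comp_apply, hy k, ih hj]
    · have : j = k + 1 := by omega
      subst this
      rw [toLe_refl f h]; rfl

/-- A sequence built by recursion from a base point and a step function. -/
noncomputable def seqOf {C : ℕ → Sort*} (base : C 0) (step : ∀ k, C k → C (k + 1)) :
    ∀ k, C k
  | 0 => base
  | (k + 1) => step k (seqOf base step k)

lemma exists_sum_of_mem_span_smul {P : Type*} [AddCommGroup P] [Module A P]
    (s : Finset A) (N : Submodule A P) {x : P}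
    (hx : x ∈ (Ideal.span (s : Set A)) • N) :
    ∃ v : A → P, (∀ a, v a ∈ N) ∧ x = ∑ a ∈ s, a • v a := by
  refine Submodule.smul_induction_on hx ?_ ?_
  · intro r hr n hn
    obtain ⟨c, -, hc⟩ := Submodule.mem_span_finset.1 hr
    refine ⟨fun a => c a • n, fun a => N.smul_mem _ hn, ?_⟩
    rw [← hc, Finset.sum_smul]
    refine Finset.sum_congr rfl fun a _ => ?_
    rw [smul_eq_mul, mul_comm, mul_smul]
  · rintro x y ⟨v, hv, hxv⟩ ⟨u, hu, hyu⟩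
    exact ⟨v + u, fun a => N.add_mem (hv a) (hu a), by
      simp [hxv, hyu, Finset.sum_add_distrib, smul_add]⟩

lemma smul_top_eq_bot {j : ℕ} (m : Ideal A)
    (htor : ∀ a ∈ m ^ (j + 1), ∀ x : M j, a • x = 0) :
    (m ^ (j + 1)) • (⊤ : Submodule A (M j)) = ⊥ := by
  refine le_bot_iff.mp (Submodule.smul_le.2 fun r hr n _ => ?_)
  simp [htor r hr n]

/-- Choice of successive lifts along the surjective transition maps. -/
noncomputable def lifts (hsurj : ∀ i, Function.Surjective (f i)) (i : ℕ) (x : M i) :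
    ∀ k, M (i + k)
  | 0 => x
  | (k + 1) => (hsurj (i + k) (lifts hsurj i x k)).choose

lemma lifts_spec (hsurj : ∀ i, Function.Surjective (f i)) (i : ℕ) (x : M i) (k : ℕ) :
    f (i + k) (lifts f hsurj i x (k + 1)) = lifts f hsurj i x k :=
  (hsurj (i + k) (lifts f hsurj i x k)).choose_spec

lemma surj_aux (hsurj : ∀ i, Function.Surjective (f i)) (i : ℕ) (x : M i) :
    ∃ y : ∀ j, M j, y ∈ invLimit f ∧ y i = x := by
  refine ⟨fun j => toLe f (Nat.le_add_left j i) (lifts f hsurj i x j), ?_, ?_⟩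
  · intro j
    show f j (toLe f (Nat.le_add_left (j + 1) i) (lifts f hsurj i x (j + 1))) = _
    rw [← LinearMap.comp_apply, f_toLe f (Nat.le_add_left (j + 1) i),
      toLe_succ f (Nat.le_add_left j i), LinearMap.comp_apply]
    show toLe f (Nat.le_add_left j i) (f (i + j) (lifts f hsurj i x (j + 1)))
      = toLe f (Nat.le_add_left j i) (lifts f hsurj i x j)
    exact congrArg _ (lifts_spec f hsurj i x j)
  · show toLe f (Nat.le_add_left i i) (lifts f hsurj i x i) = x
    have : ∀ k (h : i ≤ i + k), toLe f h (lifts f hsurj i x k) = x := by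
      intro k
      induction k with
      | zero => intro h; rw [toLe_refl f h]; rfl
      | succ k ih =>
        intro h
        rw [toLe_succ f (Nat.le_add_right i k) h, LinearMap.comp_apply]
        calc toLe f (Nat.le_add_right i k) (f (i + k) (lifts f hsurj i x (k + 1)))
            = toLe f (Nat.le_add_right i k) (lifts f hsurj i x k) :=
              congrArg _ (lifts_spec f hsurj i x k)
          _ = x := ih _
    exact this i _

end Aux

/-- Let `A` be a Noetherian ring, `m ⊆ A` an ideal, and
`(M i)` an inverse system where `M i` is a module over `A/m^(i+1)` (i.e. it is
killed by `m^(i+1)`), with surjective transition maps `f i : M (i+1) → M i`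
whose kernel is `m^(i+1) • M (i+1)` (so that `M (i+1) ⊗ A/m^(i+1) ≅ M i`).
Let `M = lim← M i`.  Then for each `i` the natural map `M ⊗ A/m^(i+1) → M i`
is an isomorphism: the projection `M → M i` is surjective with kernel
`m^(i+1) • M`. -/
theorem stmt6 {A : Type*} [CommRing A] [IsNoetherianRing A] (m : Ideal A)
    {M : ℕ → Type*} [∀ i, AddCommGroup (M i)] [∀ i, Module A (M i)]
    (f : ∀ i, M (i + 1) →ₗ[A] M i)
    (htor : ∀ i, ∀ a ∈ m ^ (i + 1), ∀ x : M i, a • x = 0)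
    (hsurj : ∀ i, Function.Surjective (f i))
    (hker : ∀ i, LinearMap.ker (f i) = (m ^ (i + 1)) • (⊤ : Submodule A (M (i + 1)))) :
    ∀ i, Function.Surjective ((LinearMap.proj i) ∘ₗ (invLimit f).subtype) ∧
      LinearMap.ker ((LinearMap.proj i) ∘ₗ (invLimit f).subtype) =
        (m ^ (i + 1)) • (⊤ : Submodule A ↥(invLimit f)) := by
  intro i
  constructor
  · intro x
    obtain ⟨y, hy, hyi⟩ := surj_aux f hsurj i x
    exact ⟨⟨y, hy⟩, hyi⟩
  · refine le_antisymm ?_ ?_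
    swap
    · refine Submodule.smul_le.2 fun r hr n _ => ?_
      simp only [LinearMap.mem_ker, LinearMap.comp_apply, Submodule.coe_subtype,
        LinearMap.proj_apply, SetLike.val_smul, Pi.smul_apply]
      exact htor i r hr _
    intro y hy
    have hyi : (y : ∀ j, M j) i = 0 := hy
    have hcomp : ∀ j, f j ((y : ∀ j, M j) (j + 1)) = (y : ∀ j, M j) j := y.2
    obtain ⟨s, hs⟩ := IsNoetherian.noetherian (m ^ (i + 1))
    -- the step of the approximation
    have hstep : ∀ (k : ℕ) (v : A → M (i + k)),
        (y : ∀ j, M j) (i + k) = ∑ a ∈ s, a • v a →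
        ∃ v' : A → M (i + (k + 1)),
          ((y : ∀ j, M j) (i + (k + 1)) = ∑ a ∈ s, a • v' a) ∧
          ∀ a, f (i + k) (v' a) - v a ∈ (m ^ k) • (⊤ : Submodule A (M (i + k))) := by
      intro k v hv
      set w : A → M (i + k + 1) := fun a => (hsurj (i + k) (v a)).choose with hw
      have hwspec : ∀ a, f (i + k) (w a) = v a := fun a => (hsurj (i + k) (v a)).choose_spec
      set d : M (i + k + 1) := (y : ∀ j, M j) (i + k + 1) - ∑ a ∈ s, a • w a with hd
      have hdker : d ∈ LinearMap.ker (f (i + k)) := by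
        simp only [LinearMap.mem_ker, hd, map_sub, map_sum, map_smul, hwspec,
          hcomp (i + k), hv, sub_self]
      rw [hker (i + k)] at hdker
      have hpow : m ^ (i + k + 1) = m ^ (i + 1) * m ^ k := by
        rw [← pow_add]; ring_nf
      rw [hpow, ← Ideal.smul_eq_mul, Submodule.smul_assoc, ← hs] at hdker
      obtain ⟨u, hu, hdu⟩ := exists_sum_of_mem_span_smul s _ hdker
      refine ⟨fun a => w a + u a, ?_, ?_⟩
      · have : ∑ a ∈ s, a • (w a + u a) = (∑ a ∈ s, a • w a) + d := by
          rw [hdu]; simp [smul_add, Finset.sum_add_distrib]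
        rw [this, hd]; abel
      · intro a
        have : f (i + k) (w a + u a) - v a = f (i + k) (u a) := by
          rw [map_add, hwspec]; abel
        rw [this]
        have : f (i + k) (u a) ∈ Submodule.map (f (i + k)) ((m ^ k) • (⊤ : Submodule A (M (i + k + 1)))) :=
          Submodule.mem_map_of_mem (hu a)
        rw [Submodule.map_smul''] at this
        exact Submodule.smul_mono le_rfl le_top this
    -- build the compatible approximations
    let C : ℕ → Type _ := fun k => {v : A → M (i + k) // (y : ∀ j, M j) (i + k) = ∑ a ∈ s, a • v a}
    have hbase : (y : ∀ j, M j) (i + 0) = ∑ a ∈ s, a • (0 : A → M (i + 0)) a := by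
      simpa using hyi
    let step : ∀ k, C k → C (k + 1) := fun k c =>
      ⟨(hstep k c.1 c.2).choose, (hstep k c.1 c.2).choose_spec.1⟩
    let V : ∀ k, C k := seqOf (⟨0, hbase⟩ : C 0) step
    have hVdiff : ∀ k a, f (i + k) ((V (k + 1)).1 a) - (V k).1 a ∈
        (m ^ k) • (⊤ : Submodule A (M (i + k))) :=
      fun k => (hstep k (V k).1 (V k).2).choose_spec.2
    -- the limiting elements
    have hle : ∀ j : ℕ, j ≤ i + (j + 1) := fun j => by omega
    let Z : A → (∀ j, M j) := fun a j => toLe f (hle j) ((V (j + 1)).1 a)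
    have hZmem : ∀ a, Z a ∈ invLimit f := by
      intro a j
      show f j (toLe f (hle (j + 1)) ((V (j + 2)).1 a)) = toLe f (hle j) ((V (j + 1)).1 a)
      rw [← LinearMap.comp_apply, f_toLe f (hle (j + 1)),
        toLe_succ f (hle j) ((Nat.le_succ j).trans (hle (j + 1))), LinearMap.comp_apply]
      have hzero : toLe f (hle j) (f (i + (j + 1)) ((V (j + 2)).1 a) - (V (j + 1)).1 a) = 0 := by
        have hmem : toLe f (hle j) (f (i + (j + 1)) ((V (j + 2)).1 a) - (V (j + 1)).1 a) ∈
            Submodule.map (toLe f (hle j)) ((m ^ (j + 1)) • (⊤ : Submodule A (M (i + (j + 1))))) :=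
          Submodule.mem_map_of_mem (hVdiff (j + 1) a)
        rw [Submodule.map_smul''] at hmem
        have : toLe f (hle j) (f (i + (j + 1)) ((V (j + 2)).1 a) - (V (j + 1)).1 a) ∈
            (m ^ (j + 1)) • (⊤ : Submodule A (M j)) :=
          Submodule.smul_mono le_rfl le_top hmem
        rwa [smul_top_eq_bot m (htor j), Submodule.mem_bot] at this
      rw [map_sub] at hzero
      exact sub_eq_zero.mp hzero
    -- y is the corresponding combination of limiting elements
    have hyeq : y = ∑ a ∈ s, a • (⟨Z a, hZmem a⟩ : ↥(invLimit f)) := by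
      apply Subtype.ext
      funext j
      have hcoe : ((∑ a ∈ s, a • (⟨Z a, hZmem a⟩ : ↥(invLimit f)) : ↥(invLimit f)) : ∀ j, M j)
          = ∑ a ∈ s, a • Z a := by
        rw [← Submodule.coe_subtype, map_sum]
        simp
      rw [hcoe]
      have : (∑ a ∈ s, a • Z a) j = ∑ a ∈ s, a • (Z a j) := by simp
      rw [this]
      have : ∑ a ∈ s, a • (Z a j) = toLe f (hle j) ((y : ∀ j, M j) (i + (j + 1))) := by
        rw [show ((y : ∀ j, M j) (i + (j + 1))) = ∑ a ∈ s, a • (V (j + 1)).1 a from (V (j + 1)).2,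
          map_sum]
        simp [Z]
      rw [this, toLe_compat f hcomp (hle j)]
    rw [hyeq]
    refine Submodule.sum_mem _ fun a ha => ?_
    refine Submodule.smul_mem_smul ?_ trivial
    rw [← hs]
    exact Ideal.subset_span ha
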